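/- Assume (A-1) and let κ ∈ ℝ be such that e^{−iκ} is an eigenvalue of U. Then: (i) every u ∈ H with Uu = e^{−iκ}u satisfies u(x) = 0 for all x ∉ Ω^i; (ii) for every θ ∈ ℂ with Im θ < 0, e^{−iκ} is an eigenvalue of U(θ). -/

import Mathlib

noncomputable section

namespace QWPaper

open Complex

/-- Sites of the two-dimensional lattice. -/
abbrev Site : Type := ℤ × ℤ

/-- Chirality indices: `0 = ←`, `1 = →`, `2 = ↓`, `3 = ↑`. -/
abbrev Chir : Type := Fin 4

abbrev V : Type := EuclideanSpace ℂ (Fin 4)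

/-- The Hilbert space `H = ℓ²(ℤ²; ℂ⁴)`. -/
abbrev H : Type := lp (fun _ : Site => V) 2

/-- The inner domain `Ω^i = {x : |x₁| ≤ M₀, |x₂| ≤ M₀}`. -/
def innerDom (M₀ : ℤ) : Set Site := {x | |x.1| ≤ M₀ ∧ |x.2| ≤ M₀}

/-- `S` is the shift operator:
`(Su)(x) = (u_←(x+e₁), u_→(x−e₁), u_↓(x+e₂), u_↑(x−e₂))`. -/
def IsShiftOp (S : H →L[ℂ] H) : Prop :=
  ∀ (u : H) (x : Site),
    (S u) x 0 = u (x.1 + 1, x.2) 0 ∧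
    (S u) x 1 = u (x.1 - 1, x.2) 1 ∧
    (S u) x 2 = u (x.1, x.2 + 1) 2 ∧
    (S u) x 3 = u (x.1, x.2 - 1) 3

/-- `A` is the bounded operator of pointwise multiplication by the matrix family `C`. -/
def IsCoinOp (A : H →L[ℂ] H) (C : Site → Matrix Chir Chir ℂ) : Prop :=
  ∀ (u : H) (x : Site) (i : Chir), (A u) x i = ∑ j : Chir, C x i j * u x j

/-- Every coin matrix is unitary. -/
def IsUnitaryCoin (C : Site → Matrix Chir Chir ℂ) : Prop :=
  ∀ x, C x ∈ Matrix.unitaryGroup Chir ℂ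

/-- Assumption (A-1): `C(x) = I₄` off `Ω^i`, with `M₀ ≥ 1`. -/
def SatisfiesA1 (C : Site → Matrix Chir Chir ℂ) (M₀ : ℤ) : Prop :=
  1 ≤ M₀ ∧ ∀ x, x ∉ innerDom M₀ → C x = 1

/-- `D_x(θ) = diag(e^{iθx₁}, e^{−iθx₁}, e^{iθx₂}, e^{−iθx₂})`. -/
def Dmat (θ : ℂ) (x : Site) : Matrix Chir Chir ℂ :=
  Matrix.diagonal ![Complex.exp (Complex.I * θ * x.1), Complex.exp (-(Complex.I * θ * x.1)),
    Complex.exp (Complex.I * θ * x.2), Complex.exp (-(Complex.I * θ * x.2))]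

/-- The translated coin `D_x(θ) C(x) D_x(θ)⁻¹`. -/
def transCoin (θ : ℂ) (C : Site → Matrix Chir Chir ℂ) (x : Site) : Matrix Chir Chir ℂ :=
  Dmat θ x * C x * (Dmat θ x)⁻¹

/-- The complex translated walk `U(θ) = e^{−iθ} S M(θ)`. -/
def transWalkOp (θ : ℂ) (S Mθ : H →L[ℂ] H) : H →L[ℂ] H :=
  Complex.exp (-(Complex.I * θ)) • (S.comp Mθ)

/-- `⟨x⟩ = (1 + |x|²)^{1/2}`. -/
def jnorm (x : Site) : ℝ := Real.sqrt (1 + ((x.1 : ℝ) ^ 2 + (x.2 : ℝ) ^ 2))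

/-- Super-exponentially decreasing elements of `H`: `e^{τ⟨x⟩} f ∈ H` for every `τ > 0`. -/
def SuperExpDecay (f : H) : Prop :=
  ∀ τ : ℝ, 0 < τ → Memℓp (fun x : Site => (Real.exp (τ * jnorm x) • f x : V)) 2

/-- Pointwise shift of an arbitrary `ℂ⁴`-valued map on `ℤ²`. -/
def ptShift (v : Site → Chir → ℂ) (x : Site) : Chir → ℂ :=
  ![v (x.1 + 1, x.2) 0, v (x.1 - 1, x.2) 1, v (x.1, x.2 + 1) 2, v (x.1, x.2 - 1) 3]

/-- Pointwise coin action on an arbitrary `ℂ⁴`-valued map on `ℤ²`. -/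
def ptCoin (C : Site → Matrix Chir Chir ℂ) (u : Site → Chir → ℂ) (x : Site) (i : Chir) : ℂ :=
  ∑ j : Chir, C x i j * u x j

/-- Pointwise action of the walk `U = SC` on arbitrary `ℂ⁴`-valued maps. -/
def ptWalk (C : Site → Matrix Chir Chir ℂ) (u : Site → Chir → ℂ) : Site → Chir → ℂ :=
  ptShift (ptCoin C u)

/-- `u` is a pointwise solution of `U u = e^{−iκ} u`. -/
def IsPtSolution (C : Site → Matrix Chir Chir ℂ) (κ : ℂ) (u : Site → Chir → ℂ) : Prop :=
  ∀ (x : Site) (i : Chir), ptWalk C u x i = Complex.exp (-(Complex.I * κ)) * u x i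

/-- `u` is outgoing with the explicit sequences `aL aR aD aU`. -/
def IsOutgoingWith (M₀ : ℤ) (κ : ℂ) (aL aR aD aU : ℤ → ℂ) (u : Site → Chir → ℂ) : Prop :=
  (∀ x : Site, x.1 < -M₀ → u x 0 = aL x.2 * Complex.exp (-(Complex.I * κ * x.1))) ∧
  (∀ x : Site, M₀ < x.1 → u x 0 = 0) ∧
  (∀ x : Site, x.1 < -M₀ → u x 1 = 0) ∧
  (∀ x : Site, M₀ < x.1 → u x 1 = aR x.2 * Complex.exp (Complex.I * κ * x.1)) ∧
  (∀ x : Site, x.2 < -M₀ → u x 2 = aD x.1 * Complex.exp (-(Complex.I * κ * x.2))) ∧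
  (∀ x : Site, M₀ < x.2 → u x 2 = 0) ∧
  (∀ x : Site, x.2 < -M₀ → u x 3 = 0) ∧
  (∀ x : Site, M₀ < x.2 → u x 3 = aU x.1 * Complex.exp (Complex.I * κ * x.2))

/-- `u` is an outgoing map. -/
def IsOutgoing (M₀ : ℤ) (κ : ℂ) (u : Site → Chir → ℂ) : Prop :=
  ∃ aL aR aD aU : ℤ → ℂ, IsOutgoingWith M₀ κ aL aR aD aU u

/-- Elastic coin: column `j` of `C_el(x)` is `e^{iα_j(x)} 𝐞_{σ(x)(j)}`. -/
def elasticCoin (σ : Site → Equiv.Perm Chir) (α : Site → Chir → ℝ) (x : Site) :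
    Matrix Chir Chir ℂ :=
  Matrix.of fun i j => if i = σ x j then Complex.exp (Complex.I * (α x j : ℂ)) else 0

/-- The initial state `δ_y 𝐞_j ∈ H`. -/
def deltaState (y : Site) (j : Chir) : H := lp.single 2 y (EuclideanSpace.single j 1)

/-- `(q, p)` is the trajectory map of the elastic walk `Uel`:
`Uel^t (δ_y 𝐞_j)` is a modulus-one multiple of `δ_{q(t,y,j)} 𝐞_{p(t,y,j)}`. -/
def IsTrajectory (Uel : unitary (H →L[ℂ] H))
    (q : ℤ → Site → Chir → Site) (p : ℤ → Site → Chir → Chir) : Prop :=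
  (∀ y j, q 0 y j = y ∧ p 0 y j = j) ∧
  ∀ (t : ℤ) (y : Site) (j : Chir), ∃ c : ℂ, ‖c‖ = 1 ∧
    ((Uel ^ t : unitary (H →L[ℂ] H)) : H →L[ℂ] H) (deltaState y j)
      = c • deltaState (q t y j) (p t y j)

/-- Euclidean norm of a lattice point. -/
def znorm (x : Site) : ℝ := Real.sqrt ((x.1 : ℝ) ^ 2 + (x.2 : ℝ) ^ 2)

/-- The parts of the barrier `K`. -/
def K1p (M₀ : ℤ) : Set Site := {x | x.1 = M₀ ∧ |x.2| ≤ M₀}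
def K1m (M₀ : ℤ) : Set Site := {x | x.1 = -M₀ ∧ |x.2| ≤ M₀}
def K2p (M₀ : ℤ) : Set Site := {x | x.2 = M₀ ∧ |x.1| ≤ M₀}
def K2m (M₀ : ℤ) : Set Site := {x | x.2 = -M₀ ∧ |x.1| ≤ M₀}
def Kbar (M₀ : ℤ) : Set Site := K1p M₀ ∪ K1m M₀ ∪ K2p M₀ ∪ K2m M₀

/-- The exterior domain `Ω^e = (ℤ² \ Ω^i) ∪ K`. -/
def outerDom (M₀ : ℤ) : Set Site := {x | x ∉ innerDom M₀} ∪ Kbar M₀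

/-- Membership in the interior space `H_i`. -/
def memHi (M₀ : ℤ) (u : H) : Prop :=
  (∀ x, x ∉ innerDom M₀ → ∀ i : Chir, u x i = 0) ∧
  (∀ x ∈ K1p M₀, u x 0 = 0) ∧ (∀ x ∈ K1m M₀, u x 1 = 0) ∧
  (∀ x ∈ K2p M₀, u x 2 = 0) ∧ (∀ x ∈ K2m M₀, u x 3 = 0)

/-- Membership in the exterior space `H_e`. -/
def memHe (M₀ : ℤ) (u : H) : Prop :=
  (∀ x, x ∉ outerDom M₀ → ∀ i : Chir, u x i = 0) ∧
  (∀ x ∈ K1m M₀ ∪ K2p M₀ ∪ K2m M₀, u x 0 = 0) ∧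
  (∀ x ∈ K1p M₀ ∪ K2p M₀ ∪ K2m M₀, u x 1 = 0) ∧
  (∀ x ∈ K2m M₀ ∪ K1p M₀ ∪ K1m M₀, u x 2 = 0) ∧
  (∀ x ∈ K2p M₀ ∪ K1p M₀ ∪ K1m M₀, u x 3 = 0)

/-- The non-penetrable barrier conditions for `U_np`. -/
def IsBarrierWalk (M₀ : ℤ) (Unp : H →L[ℂ] H) : Prop :=
  ∀ u : H,
    (∀ x ∈ K1p M₀, (Unp u) (x.1 + 1, x.2) 1 = u x 0) ∧
    (∀ x ∈ K1m M₀, (Unp u) (x.1 - 1, x.2) 0 = u x 0) ∧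
    (∀ x ∈ K2p M₀, (Unp u) (x.1, x.2 + 1) 3 = u x 2) ∧
    (∀ x ∈ K2m M₀, (Unp u) (x.1, x.2 - 1) 2 = u x 3)

/-- The rectangular loop `L_{ε,s}(μ)` (boundary of the rectangle with half-widths `a`, `b`). -/
def loopSet (μ a b : ℝ) : Set ℂ :=
  {κ | |κ.re - μ| ≤ a ∧ |κ.im| ≤ b ∧ (|κ.re - μ| = a ∨ |κ.im| = b)}

/-- The four-corner elastic coin. -/
def fourCornerCoin (m₀ n₀ : ℤ) (x : Site) : Matrix Chir Chir ℂ :=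
  if x = ((0 : ℤ), (0 : ℤ)) then !![0,1,0,0; 0,0,1,0; 0,0,0,1; 1,0,0,0]
  else if x = (m₀, (0 : ℤ)) then !![0,0,1,0; 1,0,0,0; 0,0,0,1; 0,1,0,0]
  else if x = (m₀, n₀) then !![0,0,0,1; 1,0,0,0; 0,1,0,0; 0,0,1,0]
  else if x = ((0 : ℤ), n₀) then !![0,1,0,0; 0,0,0,1; 1,0,0,0; 0,0,1,0]
  else 1

/-- The four corners. -/
def corners (m₀ n₀ : ℤ) : Set Site :=
  {((0 : ℤ), (0 : ℤ)), (m₀, (0 : ℤ)), (m₀, n₀), ((0 : ℤ), n₀)}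

/-- A perturbed four-corner coin `C_ε`. -/
def IsPerturbedFourCorner (m₀ n₀ : ℤ) (ε : ℝ) (Cε : Site → Matrix Chir Chir ℂ) : Prop :=
  IsUnitaryCoin Cε ∧
  (∀ x, x ∉ corners m₀ n₀ → Cε x = 1) ∧
  (∀ x ∈ corners m₀ n₀, ∀ i j : Chir, ‖Cε x i j - fourCornerCoin m₀ n₀ x i j‖ < ε) ∧
  Cε ((0 : ℤ), (0 : ℤ)) 1 0 = 0 ∧ Cε ((0 : ℤ), (0 : ℤ)) 3 2 = 0 ∧
  Cε (m₀, (0 : ℤ)) 3 2 = 0 ∧ Cε (m₀, (0 : ℤ)) 0 1 = 0 ∧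
  Cε (m₀, n₀) 2 3 = 0 ∧ Cε (m₀, n₀) 0 1 = 0 ∧
  Cε ((0 : ℤ), n₀) 1 0 = 0 ∧ Cε ((0 : ℤ), n₀) 2 3 = 0

/-- `c_ε⁺ = c_{↑,←}(0,0) c_{←,↓}(m₀,0) c_{↓,→}(m₀,n₀) c_{→,↑}(0,n₀)`. -/
def cPlus (m₀ n₀ : ℤ) (Cε : Site → Matrix Chir Chir ℂ) : ℂ :=
  Cε ((0 : ℤ), (0 : ℤ)) 3 0 * Cε (m₀, (0 : ℤ)) 0 2 * Cε (m₀, n₀) 2 1 * Cε ((0 : ℤ), n₀) 1 3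

/-- `c_ε⁻ = c_{→,↓}(0,0) c_{↑,→}(m₀,0) c_{←,↑}(m₀,n₀) c_{↓,←}(0,n₀)`. -/
def cMinus (m₀ n₀ : ℤ) (Cε : Site → Matrix Chir Chir ℂ) : ℂ :=
  Cε ((0 : ℤ), (0 : ℤ)) 1 2 * Cε (m₀, (0 : ℤ)) 3 1 * Cε (m₀, n₀) 0 3 * Cε ((0 : ℤ), n₀) 2 0

/-- `u ∈ H` is supported on the set `A ⊆ ℤ² × {←,→,↓,↑}`. -/
def SupportedOn (u : H) (A : Set (Site × Chir)) : Prop :=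
  ∀ (x : Site) (i : Chir), (x, i) ∉ A → u x i = 0

/-- The image of the closed trajectory `Φ₊` of the four-corner walk. -/
def imPhiPlus (m₀ n₀ : ℤ) : Set (Site × Chir) :=
  {w | ∃ t : ℤ, 1 ≤ t ∧ t ≤ n₀ ∧ w = (((0 : ℤ), t), (3 : Chir))} ∪
  {w | ∃ t : ℤ, 1 ≤ t ∧ t ≤ m₀ ∧ w = ((t, n₀), (1 : Chir))} ∪
  {w | ∃ t : ℤ, 0 ≤ t ∧ t ≤ n₀ - 1 ∧ w = ((m₀, t), (2 : Chir))} ∪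
  {w | ∃ t : ℤ, 0 ≤ t ∧ t ≤ m₀ - 1 ∧ w = ((t, (0 : ℤ)), (0 : Chir))}

/-- The image of the reversed closed trajectory `Φ₋` of the four-corner walk. -/
def imPhiMinus (m₀ n₀ : ℤ) : Set (Site × Chir) :=
  {w | ∃ t : ℤ, 1 ≤ t ∧ t ≤ m₀ ∧ w = ((t, (0 : ℤ)), (1 : Chir))} ∪
  {w | ∃ t : ℤ, 1 ≤ t ∧ t ≤ n₀ ∧ w = ((m₀, t), (3 : Chir))} ∪
  {w | ∃ t : ℤ, 0 ≤ t ∧ t ≤ m₀ - 1 ∧ w = ((t, n₀), (0 : Chir))} ∪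
  {w | ∃ t : ℤ, 0 ≤ t ∧ t ≤ n₀ - 1 ∧ w = (((0 : ℤ), t), (2 : Chir))}

/-- The eight outgoing tails starting from the four corners. -/
def tails (m₀ n₀ : ℤ) : Set (Site × Chir) :=
  {w | ∃ N y₂ : ℤ, 1 ≤ N ∧ (y₂ = 0 ∨ y₂ = n₀) ∧ w = ((-N, y₂), (0 : Chir))} ∪
  {w | ∃ N y₁ : ℤ, 1 ≤ N ∧ (y₁ = 0 ∨ y₁ = m₀) ∧ w = ((y₁, n₀ + N), (3 : Chir))} ∪
  {w | ∃ N y₁ : ℤ, 1 ≤ N ∧ (y₁ = 0 ∨ y₁ = m₀) ∧ w = ((y₁, -N), (2 : Chir))} ∪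
  {w | ∃ N y₂ : ℤ, 1 ≤ N ∧ (y₂ = 0 ∨ y₂ = n₀) ∧ w = ((m₀ + N, y₂), (1 : Chir))}

/-- The shape resonance perturbation `C_ε` of the barrier coin `C_np`. -/
def IsShapePerturbation (M₀ : ℤ) (Cnp : Site → Matrix Chir Chir ℂ) (ε : ℝ)
    (Cε : Site → Matrix Chir Chir ℂ) : Prop :=
  IsUnitaryCoin Cε ∧ (∀ x, x ∉ Kbar M₀ → Cε x = Cnp x) ∧
  (∀ x ∈ Kbar M₀, ∀ i j : Chir, ‖Cε x i j - Cnp x i j‖ < ε)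

/-- Counterclockwise contour integral of an operator-valued map over the boundary of the
rectangle centered at `μ ∈ ℝ` with half-widths `a` and `b`. -/
def rectIntegral (f : ℂ → (H →L[ℂ] H)) (μ a b : ℝ) : H →L[ℂ] H :=
  ((∫ t in (μ - a)..(μ + a), f (t - b * Complex.I)) -
      (∫ t in (μ - a)..(μ + a), f (t + b * Complex.I))) +
  Complex.I • ((∫ s in (-b)..b, f ((μ + a : ℝ) + s * Complex.I)) -
      (∫ s in (-b)..b, f ((μ - a : ℝ) + s * Complex.I)))

/-- The Riesz-type projection `(1/2π) ∮ e^{−iκ} (A − e^{−iκ})^{−1} dκ` over the rectangular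
loop of half-widths `a`, `b` around `μ`. -/
def rieszProj (A : H →L[ℂ] H) (μ a b : ℝ) : H →L[ℂ] H :=
  (1 / (2 * Real.pi)) •
    rectIntegral (fun κ => Complex.exp (-(Complex.I * κ)) •
      Ring.inverse (A - Complex.exp (-(Complex.I * κ)) • (1 : H →L[ℂ] H))) μ a b


/-! ### Auxiliary lemmas -/

lemma coord_sq_le (w : V) (i : Chir) : ‖w i‖ ^ 2 ≤ ‖w‖ ^ 2 := by
  rw [EuclideanSpace.norm_eq, Real.sq_sqrt (by positivity)]
  exact Finset.single_le_sum (f := fun j => ‖w j‖ ^ 2) (fun j _ => by positivity)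
    (Finset.mem_univ i)

lemma ray_zero (u : H) (i : Chir) (g : ℕ → Site) (hg : Function.Injective g)
    (hstep : ∀ n, ‖u (g (n + 1)) i‖ = ‖u (g n) i‖) : u (g 0) i = 0 := by
  have hconst : ∀ n, ‖u (g n) i‖ = ‖u (g 0) i‖ := by
    intro n
    induction n with
    | zero => rfl
    | succ n ih => rw [hstep n, ih]
  have hsum : Summable fun x : Site => ‖u x‖ ^ (2 : ENNReal).toReal :=
    (lp.memℓp u).summable (by norm_num)
  have hsum2 : Summable fun x : Site => ‖u x‖ ^ 2 := by
    have h2 : (2 : ENNReal).toReal = (2 : ℝ) := by norm_num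
    rw [h2] at hsum
    convert hsum using 2 with x
    rw [← Real.rpow_natCast ‖u x‖ 2]
    norm_num
  have htend : Filter.Tendsto (fun n => ‖u (g n)‖ ^ 2) Filter.atTop (nhds 0) := by
    have h1 := hsum2.tendsto_cofinite_zero
    have h2 : Filter.Tendsto g Filter.cofinite Filter.cofinite := hg.tendsto_cofinite
    have h3 := h1.comp h2
    rwa [Nat.cofinite_eq_atTop] at h3
  have hle : ‖u (g 0) i‖ ^ 2 ≤ 0 := by
    refine ge_of_tendsto' htend fun n => ?_
    calc ‖u (g 0) i‖ ^ 2 = ‖u (g n) i‖ ^ 2 := by rw [hconst n]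
      _ ≤ ‖u (g n)‖ ^ 2 := coord_sq_le _ _
  have h0 : ‖u (g 0) i‖ = 0 := by nlinarith [norm_nonneg (u (g 0) i)]
  exact norm_eq_zero.mp h0

lemma ray_zero_of_rel (u : H) (i : Chir) (g : ℕ → Site) (hg : Function.Injective g)
    (lam : ℂ) (hlam : ‖lam‖ = 1)
    (hstep : ∀ n, u (g (n + 1)) i = lam * u (g n) i ∨ u (g n) i = lam * u (g (n + 1)) i) :
    u (g 0) i = 0 := by
  refine ray_zero u i g hg fun n => ?_
  rcases hstep n with h | h
  · rw [h, norm_mul, hlam, one_mul]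
  · rw [h, norm_mul, hlam, one_mul]

/-- Part (i): any pointwise eigenfunction with unimodular eigenvalue vanishes off `Ω^i`. -/
lemma eigen_support (M₀ : ℤ) (C : Site → Matrix Chir Chir ℂ)
    (hA1 : SatisfiesA1 C M₀)
    (S Cop : H →L[ℂ] H) (hS : IsShiftOp S) (hCop : IsCoinOp Cop C)
    (κ : ℝ) (u : H)
    (hu : (S.comp Cop) u = Complex.exp (-(Complex.I * (κ : ℂ))) • u) :
    ∀ x, x ∉ innerDom M₀ → ∀ i : Chir, u x i = 0 := by
  set lam := Complex.exp (-(Complex.I * (κ : ℂ))) with hlamdef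
  have hlam : ‖lam‖ = 1 := by
    rw [hlamdef, Complex.norm_exp]
    simp
  have hpt : ∀ (x : Site) (i : Chir), (S (Cop u)) x i = lam * u x i := by
    intro x i
    have h1 : ((S.comp Cop) u) x i = ((lam • u : H)) x i := by rw [hu]
    simpa [ContinuousLinearMap.comp_apply, lp.coeFn_smul] using h1
  have hone : ∀ y : Site, y ∉ innerDom M₀ → ∀ i, (Cop u) y i = u y i := by
    intro y hy i
    rw [hCop u y i, hA1.2 y hy]
    simp [Matrix.one_apply]
  have hrel0 : ∀ a b : ℤ, ((a + 1, b) : Site) ∉ innerDom M₀ →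
      u (a + 1, b) 0 = lam * u (a, b) 0 := by
    intro a b hy
    have h1 := (hS (Cop u) ((a, b) : Site)).1
    have h2 := hpt ((a, b) : Site) 0
    rw [h1, hone _ hy 0] at h2
    exact h2
  have hrel1 : ∀ a b : ℤ, ((a - 1, b) : Site) ∉ innerDom M₀ →
      u (a - 1, b) 1 = lam * u (a, b) 1 := by
    intro a b hy
    have h1 := (hS (Cop u) ((a, b) : Site)).2.1
    have h2 := hpt ((a, b) : Site) 1
    rw [h1, hone _ hy 1] at h2
    exact h2
  have hrel2 : ∀ a b : ℤ, ((a, b + 1) : Site) ∉ innerDom M₀ →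
      u (a, b + 1) 2 = lam * u (a, b) 2 := by
    intro a b hy
    have h1 := (hS (Cop u) ((a, b) : Site)).2.2.1
    have h2 := hpt ((a, b) : Site) 2
    rw [h1, hone _ hy 2] at h2
    exact h2
  have hrel3 : ∀ a b : ℤ, ((a, b - 1) : Site) ∉ innerDom M₀ →
      u (a, b - 1) 3 = lam * u (a, b) 3 := by
    intro a b hy
    have h1 := (hS (Cop u) ((a, b) : Site)).2.2.2
    have h2 := hpt ((a, b) : Site) 3
    rw [h1, hone _ hy 3] at h2
    exact h2
  intro x hx i
  simp only [innerDom, Set.mem_setOf_eq, not_and_or, not_le, lt_abs] at hx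
  fin_cases i
  · -- component 0 (←)
    by_cases h1 : x.1 < -M₀
    · -- left ray
      have hres := ray_zero_of_rel u 0 (fun n : ℕ => ((x.1 - n, x.2) : Site))
        (fun a b hab => by
          have h := congrArg Prod.fst hab
          simp only at h
          omega)
        lam hlam
        (fun n => by
          right
          have hc : ((x.1 - (n + 1) + 1, x.2) : Site) ∉ innerDom M₀ := by
            simp only [innerDom, Set.mem_setOf_eq, not_and_or, not_le, lt_abs]
            omega
          have h := hrel0 (x.1 - (n + 1)) x.2 hc
          have he : (x.1 - ((n : ℤ) + 1) + 1) = x.1 - (n : ℤ) := by ring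
          rw [he] at h
          push_cast
          exact h)
      simpa using hres
    · -- right ray
      have hres := ray_zero_of_rel u 0 (fun n : ℕ => ((x.1 + n, x.2) : Site))
        (fun a b hab => by
          have h := congrArg Prod.fst hab
          simp only at h
          omega)
        lam hlam
        (fun n => by
          left
          have hc : ((x.1 + n + 1, x.2) : Site) ∉ innerDom M₀ := by
            simp only [innerDom, Set.mem_setOf_eq, not_and_or, not_le, lt_abs]
            omega
          have h := hrel0 (x.1 + n) x.2 hc
          push_cast
          rw [show x.1 + ((n : ℤ) + 1) = x.1 + (n : ℤ) + 1 from by ring]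
          exact h)
      simpa using hres
  · -- component 1 (→)
    by_cases h1 : M₀ < x.1
    · -- right ray
      have hres := ray_zero_of_rel u 1 (fun n : ℕ => ((x.1 + n, x.2) : Site))
        (fun a b hab => by
          have h := congrArg Prod.fst hab
          simp only at h
          omega)
        lam hlam
        (fun n => by
          right
          have hc : ((x.1 + (n + 1) - 1, x.2) : Site) ∉ innerDom M₀ := by
            simp only [innerDom, Set.mem_setOf_eq, not_and_or, not_le, lt_abs]
            omega
          have h := hrel1 (x.1 + (n + 1)) x.2 hc
          have he : (x.1 + ((n : ℤ) + 1) - 1) = x.1 + (n : ℤ) := by ring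
          rw [he] at h
          push_cast
          exact h)
      simpa using hres
    · -- left ray
      have hres := ray_zero_of_rel u 1 (fun n : ℕ => ((x.1 - n, x.2) : Site))
        (fun a b hab => by
          have h := congrArg Prod.fst hab
          simp only at h
          omega)
        lam hlam
        (fun n => by
          left
          have hc : ((x.1 - n - 1, x.2) : Site) ∉ innerDom M₀ := by
            simp only [innerDom, Set.mem_setOf_eq, not_and_or, not_le, lt_abs]
            omega
          have h := hrel1 (x.1 - n) x.2 hc
          push_cast
          rw [show x.1 - ((n : ℤ) + 1) = x.1 - (n : ℤ) - 1 from by ring]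
          exact h)
      simpa using hres
  · -- component 2 (↓)
    by_cases h1 : x.2 < -M₀
    · -- down ray
      have hres := ray_zero_of_rel u 2 (fun n : ℕ => ((x.1, x.2 - n) : Site))
        (fun a b hab => by
          have h := congrArg Prod.snd hab
          simp only at h
          omega)
        lam hlam
        (fun n => by
          right
          have hc : ((x.1, x.2 - (n + 1) + 1) : Site) ∉ innerDom M₀ := by
            simp only [innerDom, Set.mem_setOf_eq, not_and_or, not_le, lt_abs]
            omega
          have h := hrel2 x.1 (x.2 - (n + 1)) hc
          have he : (x.2 - ((n : ℤ) + 1) + 1) = x.2 - (n : ℤ) := by ring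
          rw [he] at h
          push_cast
          exact h)
      simpa using hres
    · -- up ray
      have hres := ray_zero_of_rel u 2 (fun n : ℕ => ((x.1, x.2 + n) : Site))
        (fun a b hab => by
          have h := congrArg Prod.snd hab
          simp only at h
          omega)
        lam hlam
        (fun n => by
          left
          have hc : ((x.1, x.2 + n + 1) : Site) ∉ innerDom M₀ := by
            simp only [innerDom, Set.mem_setOf_eq, not_and_or, not_le, lt_abs]
            omega
          have h := hrel2 x.1 (x.2 + n) hc
          push_cast
          rw [show x.2 + ((n : ℤ) + 1) = x.2 + (n : ℤ) + 1 from by ring]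
          exact h)
      simpa using hres
  · -- component 3 (↑)
    by_cases h1 : M₀ < x.2
    · -- up ray
      have hres := ray_zero_of_rel u 3 (fun n : ℕ => ((x.1, x.2 + n) : Site))
        (fun a b hab => by
          have h := congrArg Prod.snd hab
          simp only at h
          omega)
        lam hlam
        (fun n => by
          right
          have hc : ((x.1, x.2 + (n + 1) - 1) : Site) ∉ innerDom M₀ := by
            simp only [innerDom, Set.mem_setOf_eq, not_and_or, not_le, lt_abs]
            omega
          have h := hrel3 x.1 (x.2 + (n + 1)) hc
          have he : (x.2 + ((n : ℤ) + 1) - 1) = x.2 + (n : ℤ) := by ring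
          rw [he] at h
          push_cast
          exact h)
      simpa using hres
    · -- down ray
      have hres := ray_zero_of_rel u 3 (fun n : ℕ => ((x.1, x.2 - n) : Site))
        (fun a b hab => by
          have h := congrArg Prod.snd hab
          simp only at h
          omega)
        lam hlam
        (fun n => by
          left
          have hc : ((x.1, x.2 - n - 1) : Site) ∉ innerDom M₀ := by
            simp only [innerDom, Set.mem_setOf_eq, not_and_or, not_le, lt_abs]
            omega
          have h := hrel3 x.1 (x.2 - n) hc
          push_cast
          rw [show x.2 - ((n : ℤ) + 1) = x.2 - (n : ℤ) - 1 from by ring]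
          exact h)
      simpa using hres

/-- The diagonal entries of `Dmat`. -/
def dv (θ : ℂ) (y : Site) : Chir → ℂ :=
  ![Complex.exp (Complex.I * θ * y.1), Complex.exp (-(Complex.I * θ * y.1)),
    Complex.exp (Complex.I * θ * y.2), Complex.exp (-(Complex.I * θ * y.2))]

lemma Dmat_eq_diagonal (θ : ℂ) (y : Site) : Dmat θ y = Matrix.diagonal (dv θ y) := rfl

lemma dv_mul_inv (θ : ℂ) (y : Site) (j : Chir) : dv (-θ) y j * dv θ y j = 1 := by
  fin_cases j <;> simp [dv] <;> rw [← Complex.exp_add] <;> norm_num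

lemma dv_ne_zero (θ : ℂ) (y : Site) (j : Chir) : dv θ y j ≠ 0 := by
  fin_cases j <;> simp [dv]

lemma Dmat_mul_neg (θ : ℂ) (y : Site) : Dmat θ y * Dmat (-θ) y = 1 := by
  rw [Dmat_eq_diagonal, Dmat_eq_diagonal, Matrix.diagonal_mul_diagonal]
  rw [show (fun i => dv θ y i * dv (-θ) y i) = fun _ => (1 : ℂ) from funext fun j => by
    rw [mul_comm]; exact dv_mul_inv θ y j]
  exact Matrix.diagonal_one

lemma Dmat_inv (θ : ℂ) (y : Site) : (Dmat θ y)⁻¹ = Dmat (-θ) y :=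
  Matrix.inv_eq_right_inv (Dmat_mul_neg θ y)

lemma transCoin_apply (θ : ℂ) (C : Site → Matrix Chir Chir ℂ) (y : Site) (i j : Chir) :
    transCoin θ C y i j = dv θ y i * C y i j * dv (-θ) y j := by
  rw [transCoin, Dmat_inv, Dmat_eq_diagonal, Dmat_eq_diagonal]
  rw [Matrix.mul_diagonal, Matrix.diagonal_mul]

/-- Build an element of `H` from a function with a `Memℓp` proof. -/
def mkH (f : (x : Site) → V) (h : Memℓp f 2) : H := ⟨f, h⟩

lemma mkH_apply (f : (x : Site) → V) (h : Memℓp f 2) (y : Site) : mkH f h y = f y := rfl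

/-- if `e^{−iκ}`, `κ ∈ ℝ`, is an eigenvalue of `U`, then every eigenfunction is
supported in `Ω^i`, and `e^{−iκ}` is an eigenvalue of `U(θ)` for every `θ` with `Im θ < 0`. -/
theorem embedded_eigenvalue_support_and_invariance
    (M₀ : ℤ) (C : Site → Matrix Chir Chir ℂ)
    (hC : IsUnitaryCoin C) (hA1 : SatisfiesA1 C M₀)
    (S Cop : H →L[ℂ] H) (hS : IsShiftOp S) (hCop : IsCoinOp Cop C)
    (hUnit : S.comp Cop ∈ unitary (H →L[ℂ] H))
    (κ : ℝ)
    (hev : ∃ u : H, u ≠ 0 ∧ (S.comp Cop) u = Complex.exp (-(Complex.I * (κ : ℂ))) • u) :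
    (∀ u : H, (S.comp Cop) u = Complex.exp (-(Complex.I * (κ : ℂ))) • u →
      ∀ x, x ∉ innerDom M₀ → ∀ i : Chir, u x i = 0) ∧
    ∀ θ : ℂ, θ.im < 0 → ∀ Mθ : H →L[ℂ] H, IsCoinOp Mθ (transCoin θ C) →
      ∃ v : H, v ≠ 0 ∧ (transWalkOp θ S Mθ) v = Complex.exp (-(Complex.I * (κ : ℂ))) • v := by
  refine ⟨fun u hu => eigen_support M₀ C hA1 S Cop hS hCop κ u hu, ?_⟩
  intro θ hθ Mθ hMθ
  obtain ⟨u, hu0, hu⟩ := hev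
  set lam := Complex.exp (-(Complex.I * (κ : ℂ))) with hlamdef
  have hsupp := eigen_support M₀ C hA1 S Cop hS hCop κ u hu
  have hpt : ∀ (x : Site) (i : Chir), (S (Cop u)) x i = lam * u x i := by
    intro x i
    have h1 : ((S.comp Cop) u) x i = ((lam • u : H)) x i := by rw [hu]
    simpa [ContinuousLinearMap.comp_apply, lp.coeFn_smul] using h1
  set sfin : Finset Site := Finset.Icc (-M₀) M₀ ×ˢ Finset.Icc (-M₀) M₀ with hsfin
  have hzero : ∀ y : Site, y ∉ sfin → ∀ i, u y i = 0 := by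
    intro y hy i
    apply hsupp
    intro hmem
    apply hy
    simp only [innerDom, Set.mem_setOf_eq, abs_le] at hmem
    simp only [hsfin, Finset.mem_product, Finset.mem_Icc]
    exact ⟨hmem.1, hmem.2⟩
  set vf : (y : Site) → V := (fun y : Site => (WithLp.toLp 2 (fun i => dv θ y i * u y i) : V)) with hvf
  have hmem : Memℓp vf 2 := by
    apply memℓp_gen
    apply summable_of_ne_finset_zero (s := sfin)
    intro y hy
    have h0 : vf y = 0 := by
      ext i
      simp [hvf, hzero y hy i]
    rw [h0]
    simp
  set v : H := mkH vf hmem with hvdef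
  have hvapp : ∀ (y : Site) (i : Chir), v y i = dv θ y i * u y i := fun _ _ => rfl
  have hexp1 : Complex.exp (-(Complex.I * θ)) * Complex.exp (Complex.I * θ) = 1 := by
    rw [← Complex.exp_add, neg_add_cancel, Complex.exp_zero]
  refine ⟨v, ?_, ?_⟩
  · -- v ≠ 0
    have hex : ∃ (x : Site) (i : Chir), u x i ≠ 0 := by
      by_contra h
      push_neg at h
      apply hu0
      apply lp.ext
      funext x
      ext i
      simpa using h x i
    obtain ⟨x, i, hxi⟩ := hex
    intro h0
    have hz : v x i = 0 := by rw [h0]; simp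
    rw [hvapp] at hz
    rcases mul_eq_zero.mp hz with h | h
    · exact dv_ne_zero θ x i h
    · exact hxi h
  · -- eigen equation
    have hMv : ∀ (y : Site) (i : Chir), (Mθ v) y i = dv θ y i * (Cop u) y i := by
      intro y i
      rw [hMθ v y i, hCop u y i, Finset.mul_sum]
      refine Finset.sum_congr rfl fun j _ => ?_
      rw [transCoin_apply, hvapp]
      linear_combination (dv θ y i * C y i j * u y j) * dv_mul_inv θ y j
    refine lp.ext (funext fun x => PiLp.ext fun i => ?_)
    have hL : ((transWalkOp θ S Mθ) v) x i
        = Complex.exp (-(Complex.I * θ)) * (S (Mθ v)) x i := by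
      simp [transWalkOp, lp.coeFn_smul]
    have hR : ((lam • v : H)) x i = lam * (dv θ x i * u x i) := by
      rw [← hvapp]
      simp [lp.coeFn_smul]
    show ((transWalkOp θ S Mθ) v) x i = ((lam • v : H)) x i
    rw [hL, hR]
    fin_cases i
    · show Complex.exp (-(Complex.I * θ)) * (S (Mθ v)) x 0 = lam * (dv θ x 0 * u x 0)
      have hc : (Cop u) ((x.1 + 1, x.2) : Site) 0 = lam * u x 0 := by
        rw [← (hS (Cop u) x).1]; exact hpt x 0
      rw [(hS (Mθ v) x).1, hMv, hc]
      simp only [dv, Matrix.cons_val_zero]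
      push_cast
      rw [show Complex.I * θ * ((x.1 : ℂ) + 1) = Complex.I * θ * (x.1 : ℂ) + Complex.I * θ
        from by ring, Complex.exp_add]
      linear_combination (lam * u x 0 * Complex.exp (Complex.I * θ * (x.1 : ℂ))) * hexp1
    · show Complex.exp (-(Complex.I * θ)) * (S (Mθ v)) x 1 = lam * (dv θ x 1 * u x 1)
      have hc : (Cop u) ((x.1 - 1, x.2) : Site) 1 = lam * u x 1 := by
        rw [← (hS (Cop u) x).2.1]; exact hpt x 1
      rw [(hS (Mθ v) x).2.1, hMv, hc]
      simp only [dv, Matrix.cons_val_one, Matrix.head_cons]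
      push_cast
      rw [show -(Complex.I * θ * ((x.1 : ℂ) - 1)) = -(Complex.I * θ * (x.1 : ℂ)) + Complex.I * θ
        from by ring, Complex.exp_add]
      linear_combination (lam * u x 1 * Complex.exp (-(Complex.I * θ * (x.1 : ℂ)))) * hexp1
    · show Complex.exp (-(Complex.I * θ)) * (S (Mθ v)) x 2 = lam * (dv θ x 2 * u x 2)
      have hc : (Cop u) ((x.1, x.2 + 1) : Site) 2 = lam * u x 2 := by
        rw [← (hS (Cop u) x).2.2.1]; exact hpt x 2
      rw [(hS (Mθ v) x).2.2.1, hMv, hc]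
      simp only [dv, Matrix.cons_val_two, Matrix.tail_cons, Matrix.head_cons]
      push_cast
      rw [show Complex.I * θ * ((x.2 : ℂ) + 1) = Complex.I * θ * (x.2 : ℂ) + Complex.I * θ
        from by ring, Complex.exp_add]
      linear_combination (lam * u x 2 * Complex.exp (Complex.I * θ * (x.2 : ℂ))) * hexp1
    · show Complex.exp (-(Complex.I * θ)) * (S (Mθ v)) x 3 = lam * (dv θ x 3 * u x 3)
      have hc : (Cop u) ((x.1, x.2 - 1) : Site) 3 = lam * u x 3 := by
        rw [← (hS (Cop u) x).2.2.2]; exact hpt x 3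
      rw [(hS (Mθ v) x).2.2.2, hMv, hc]
      simp only [dv, Matrix.cons_val_three, Matrix.tail_cons, Matrix.head_cons]
      push_cast
      rw [show -(Complex.I * θ * ((x.2 : ℂ) - 1)) = -(Complex.I * θ * (x.2 : ℂ)) + Complex.I * θ
        from by ring, Complex.exp_add]
      linear_combination (lam * u x 3 * Complex.exp (-(Complex.I * θ * (x.2 : ℂ)))) * hexp1

end QWPaper
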